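/- Let p, q ≥ 1 and let B be the adjacency matrix of (K_{p,q},−), i.e. the block matrix [[0_p, −J_{p×q}],[−J_{q×p}, 0_q]] with J denoting all-ones blocks. For every real t with t ≠ 0 and t² ≠ pq, the matrix tI_{p+q} − B is invertible and the coronal of B at t equals χ_B(t) = ((p+q)t − 2pq)/(t² − pq). -/

import Mathlib

open Matrix BigOperators

/-- The coronal of a matrix `B` at `t`: `jᵀ (tI − B)⁻¹ j`, where `j` is the all-ones vector. -/
noncomputable def coronal {V : Type*} [Fintype V] [DecidableEq V]
    (B : Matrix V V ℝ) (t : ℝ) : ℝ :=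
  dotProduct (fun _ => 1) (((t • (1 : Matrix V V ℝ) - B)⁻¹).mulVec fun _ => 1)

/-- The adjacency matrix of `(K_{p,q}, −)`, the all-negative complete bipartite signed graph:
the block matrix `[[0, −J], [−J, 0]]`. -/
def negKpq (p q : ℕ) : Matrix (Fin p ⊕ Fin q) (Fin p ⊕ Fin q) ℝ :=
  Matrix.fromBlocks 0 (Matrix.of fun _ _ => -1) (Matrix.of fun _ _ => -1) 0

/-- For `p, q ≥ 1` and real `t` with `t ≠ 0` and `t² ≠ pq`, the matrix `tI − A(K_{p,q},−)` is
invertible and the coronal of `A(K_{p,q},−)` at `t` equals `((p+q)t − 2pq)/(t² − pq)`. -/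
theorem coronal_negKpq {p q : ℕ} (hp : 1 ≤ p) (hq : 1 ≤ q) (t : ℝ)
    (ht : t ≠ 0) (ht2 : t ^ 2 ≠ (p : ℝ) * q) :
    IsUnit (t • (1 : Matrix (Fin p ⊕ Fin q) (Fin p ⊕ Fin q) ℝ) - negKpq p q).det ∧
    coronal (negKpq p q) t = (((p : ℝ) + q) * t - 2 * p * q) / (t ^ 2 - p * q) := by
  have hD : t ^ 2 - (p:ℝ) * q ≠ 0 := sub_ne_zero.mpr ht2
  let N : Matrix (Fin p ⊕ Fin q) (Fin p ⊕ Fin q) ℝ :=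
    Matrix.of fun i j =>
      match i, j with
      | Sum.inl i, Sum.inl j => (if i = j then 1/t else 0) + q/(t*(t^2 - (p:ℝ)*q))
      | Sum.inl _, Sum.inr _ => -1/(t^2 - (p:ℝ)*q)
      | Sum.inr _, Sum.inl _ => -1/(t^2 - (p:ℝ)*q)
      | Sum.inr i, Sum.inr j => (if i = j then 1/t else 0) + p/(t*(t^2 - (p:ℝ)*q))
  have hMN : (t • (1 : Matrix (Fin p ⊕ Fin q) (Fin p ⊕ Fin q) ℝ) - negKpq p q) * N = 1 := by
    ext i j
    rcases i with i | i <;> rcases j with j | j <;>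
      simp [N, negKpq, Matrix.mul_apply, Fintype.sum_sum_type, Matrix.one_apply,
        mul_ite, mul_add, Finset.sum_add_distrib, Finset.sum_ite_eq, Finset.mul_sum] <;>
      (try split_ifs) <;> field_simp <;> ring
  refine ⟨Matrix.isUnit_det_of_right_inverse hMN, ?_⟩
  rw [coronal, Matrix.inv_eq_right_inv hMN]
  simp [N, dotProduct, Matrix.mulVec, Fintype.sum_sum_type,
    Finset.sum_add_distrib, Finset.sum_ite_eq, Finset.sum_const, Finset.card_univ]
  field_simp
  ring
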